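/- Let G', G'' be k'×n' and k''×n'' matrices over 𝔽₂ with coset spectra D'_i = d(g'^{(i)}, span{g'^{(i+1)},...,g'^{(k')}}) and D''_i defined analogously. Form the right-stitched generator matrix G = [[G', 0],[P, G'']] where every row of P equals the corresponding row of G'' restricted to a column subset that repeats each coordinate of G'' exactly once (the case N' ≥ N'' with P_{[N''],Γ''} = G'' and zero elsewhere). Then the coset spectrum D of G satisfies D_i = D'_i for i ≤ k' and D_i = 2·D''_{i-k'} for i > k'. -/

import Mathlib

set_option maxRecDepth 10000

open Matrix Finset

section Aux
variable {N' N'' : ℕ}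

lemma distSplit (u v : Fin (N' + N'') → ZMod 2) :
    hammingDist u v =
      hammingDist (fun j => u (Fin.castAdd N'' j)) (fun j => v (Fin.castAdd N'' j)) +
      hammingDist (fun l => u (Fin.natAdd N' l)) (fun l => v (Fin.natAdd N' l)) := by
  simp only [hammingDist, Finset.card_filter, Fin.sum_univ_add]

noncomputable def Qmap (γ : Fin N'' → Fin N') :
    (Fin N'' → ZMod 2) →ₗ[ZMod 2] (Fin N' → ZMod 2) where
  toFun b := fun j => ∑ l, if γ l = j then b l else 0
  map_add' b b' := by
    funext j
    simp only [Pi.add_apply]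
    rw [← Finset.sum_add_distrib]
    refine Finset.sum_congr rfl fun l _ => ?_
    by_cases h : γ l = j <;> simp [h]
  map_smul' c b := by
    funext j
    simp only [RingHom.id_apply, Pi.smul_apply, smul_eq_mul, Finset.mul_sum]
    refine Finset.sum_congr rfl fun l _ => ?_
    by_cases h : γ l = j <;> simp [h]

lemma Qmap_γ {γ : Fin N'' → Fin N'} (hγ : Function.Injective γ)
    (b : Fin N'' → ZMod 2) (l : Fin N'') : Qmap γ b (γ l) = b l := by
  show (∑ m, if γ m = γ l then b m else 0) = b l
  rw [Finset.sum_eq_single l]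
  · simp
  · intro m _ hm; exact if_neg (fun h => hm (hγ h))
  · simp

lemma Qmap_not (γ : Fin N'' → Fin N') {j : Fin N'} (h : ∀ l, γ l ≠ j)
    (b : Fin N'' → ZMod 2) : Qmap γ b j = 0 := by
  show (∑ m, if γ m = j then b m else 0) = 0
  exact Finset.sum_eq_zero fun m _ => if_neg (h m)

lemma Qmap_dist {γ : Fin N'' → Fin N'} (hγ : Function.Injective γ)
    (b b' : Fin N'' → ZMod 2) : hammingDist (Qmap γ b) (Qmap γ b') = hammingDist b b' := by
  have hset : ({j | Qmap γ b j ≠ Qmap γ b' j} : Finset (Fin N'))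
      = Finset.image γ {l | b l ≠ b' l} := by
    ext j
    simp only [Finset.mem_filter, Finset.mem_image, Finset.mem_univ, true_and]
    constructor
    · intro hj
      by_cases h : ∃ l, γ l = j
      · obtain ⟨l, rfl⟩ := h
        exact ⟨l, by rwa [Qmap_γ hγ, Qmap_γ hγ] at hj, rfl⟩
      · push_neg at h
        exact absurd (by rw [Qmap_not γ h, Qmap_not γ h]) hj
    · rintro ⟨l, hl, rfl⟩
      rw [Qmap_γ hγ, Qmap_γ hγ]; exact hl
  rw [hammingDist, hammingDist, hset, Finset.card_image_of_injective _ hγ]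

def emb (a : Fin N' → ZMod 2) (b : Fin N'' → ZMod 2) : Fin (N' + N'') → ZMod 2 :=
  fun x => Sum.elim a b (finSumFinEquiv.symm x)

@[simp] lemma emb_castAdd (a : Fin N' → ZMod 2) (b : Fin N'' → ZMod 2) (j : Fin N') :
    emb a b (Fin.castAdd N'' j) = a j := by simp [emb]

@[simp] lemma emb_natAdd (a : Fin N' → ZMod 2) (b : Fin N'' → ZMod 2) (l : Fin N'') :
    emb a b (Fin.natAdd N' l) = b l := by simp [emb]

lemma emb_add (a a' : Fin N' → ZMod 2) (b b' : Fin N'' → ZMod 2) :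
    emb (a + a') (b + b') = emb a b + emb a' b' := by
  funext x
  simp only [emb, Pi.add_apply]
  rcases finSumFinEquiv.symm x with j | l <;> simp

lemma emb_smul (c : ZMod 2) (a : Fin N' → ZMod 2) (b : Fin N'' → ZMod 2) :
    emb (c • a) (c • b) = c • emb a b := by
  funext x
  simp only [emb, Pi.smul_apply]
  rcases finSumFinEquiv.symm x with j | l <;> simp

lemma emb_zero : (emb 0 0 : Fin (N' + N'') → ZMod 2) = 0 := by
  funext x
  simp only [emb]
  rcases finSumFinEquiv.symm x with j | l <;> simp

end Aux

/-- The coset spectrum entry `D_i` of a matrix `G` over `𝔽₂`: the minimum Hamming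
distance from the `i`-th row to the span of the later rows. -/
noncomputable def cosetD {k n : ℕ} (G : Matrix (Fin k) (Fin n) (ZMod 2)) (i : Fin k) : ℕ :=
  sInf ((fun w => hammingDist (G i) w) ''
    ((Submodule.span (ZMod 2) {v : Fin n → ZMod 2 | ∃ j, i < j ∧ v = G j} :
        Submodule (ZMod 2) (Fin n → ZMod 2)) : Set (Fin n → ZMod 2)))

theorem right_stitched_coset_spectrum_ge (N' N'' : ℕ) (hle : N'' ≤ N')
    (G' : Matrix (Fin N') (Fin N') (ZMod 2))
    (G'' : Matrix (Fin N'') (Fin N'') (ZMod 2))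
    (γ : Fin N'' → Fin N') (hγ : Function.Injective γ)
    (P : Matrix (Fin N'') (Fin N') (ZMod 2))
    (hP : ∀ i l, P i (γ l) = G'' i l)
    (hP0 : ∀ i j, (∀ l, γ l ≠ j) → P i j = 0) :
    let G : Matrix (Fin (N' + N'')) (Fin (N' + N'')) (ZMod 2) :=
      Matrix.reindex finSumFinEquiv finSumFinEquiv (Matrix.fromBlocks G' 0 P G'')
    (∀ i : Fin N', cosetD G (Fin.castAdd N'' i) = cosetD G' i) ∧
    (∀ i : Fin N'', cosetD G (Fin.natAdd N' i) = 2 * cosetD G'' i) := by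
  intro G
  -- rows of G
  have rowL : ∀ j : Fin N', G (Fin.castAdd N'' j) = emb (G' j) 0 := by
    intro j; funext c
    show (fromBlocks G' 0 P G'') (finSumFinEquiv.symm (Fin.castAdd N'' j))
        (finSumFinEquiv.symm c) = Sum.elim (G' j) (0 : Fin N'' → ZMod 2) (finSumFinEquiv.symm c)
    rw [finSumFinEquiv_symm_apply_castAdd]
    rcases finSumFinEquiv.symm c with c' | c' <;> simp [Matrix.fromBlocks]
  have rowR : ∀ l : Fin N'', G (Fin.natAdd N' l) = emb (P l) (G'' l) := by
    intro l; funext c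
    show (fromBlocks G' 0 P G'') (finSumFinEquiv.symm (Fin.natAdd N' l))
        (finSumFinEquiv.symm c) = Sum.elim (P l) (G'' l) (finSumFinEquiv.symm c)
    rw [finSumFinEquiv_symm_apply_natAdd]
    rcases finSumFinEquiv.symm c with c' | c' <;> simp [Matrix.fromBlocks]
  have hPQ : ∀ l, Qmap γ (G'' l) = P l := by
    intro l; funext j
    by_cases h : ∃ m, γ m = j
    · obtain ⟨m, rfl⟩ := h; rw [Qmap_γ hγ, hP]
    · push_neg at h; rw [Qmap_not γ h, hP0 _ _ h]
  constructor
  · -- first block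
    intro i
    set S' : Submodule (ZMod 2) (Fin N' → ZMod 2) :=
      Submodule.span (ZMod 2) {v : Fin N' → ZMod 2 | ∃ j, i < j ∧ v = G' j} with hS'
    have h1a : ∀ w ∈ Submodule.span (ZMod 2)
        {v : Fin (N' + N'') → ZMod 2 | ∃ j, Fin.castAdd N'' i < j ∧ v = G j},
        (fun j => w (Fin.castAdd N'' j)) - Qmap γ (fun l => w (Fin.natAdd N' l)) ∈ S' := by
      intro w hw
      induction hw using Submodule.span_induction with
      | mem x hx =>
          obtain ⟨j, hij, rfl⟩ := hx
          revert hij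
          induction j using Fin.addCases with
          | left j' =>
              intro hij
              have hij' : i < j' := by
                rw [Fin.lt_def] at hij ⊢
                rwa [Fin.coe_castAdd, Fin.coe_castAdd] at hij
              rw [rowL j']
              simp only [emb_castAdd, emb_natAdd]
              have : (fun l => (0 : Fin N'' → ZMod 2) l) = (0 : Fin N'' → ZMod 2) := rfl
              rw [this, map_zero, sub_zero]
              exact Submodule.subset_span ⟨j', hij', rfl⟩
          | right l =>
              intro _
              rw [rowR l]
              simp only [emb_castAdd, emb_natAdd]
              have : (fun m => G'' l m) = G'' l := rfl
              rw [this, hPQ l, sub_self]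
              exact Submodule.zero_mem _
      | zero =>
          have : (fun l => (0 : Fin (N' + N'') → ZMod 2) (Fin.natAdd N' l))
              = (0 : Fin N'' → ZMod 2) := rfl
          rw [this, map_zero, sub_zero]
          exact Submodule.zero_mem _
      | add x y hx hy px py =>
          have hr : (fun l => (x + y) (Fin.natAdd N' l))
              = (fun l => x (Fin.natAdd N' l)) + (fun l => y (Fin.natAdd N' l)) := rfl
          have hl : (fun j => (x + y) (Fin.castAdd N'' j))
              = (fun j => x (Fin.castAdd N'' j)) + (fun j => y (Fin.castAdd N'' j)) := rfl
          rw [hr, hl, map_add]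
          have : ((fun j => x (Fin.castAdd N'' j)) + fun j => y (Fin.castAdd N'' j))
              - (Qmap γ (fun l => x (Fin.natAdd N' l)) + Qmap γ (fun l => y (Fin.natAdd N' l)))
              = ((fun j => x (Fin.castAdd N'' j)) - Qmap γ (fun l => x (Fin.natAdd N' l)))
              + ((fun j => y (Fin.castAdd N'' j)) - Qmap γ (fun l => y (Fin.natAdd N' l))) := by
            abel
          rw [this]
          exact Submodule.add_mem _ px py
      | smul c x hx px =>
          have hr : (fun l => (c • x) (Fin.natAdd N' l))
              = c • (fun l => x (Fin.natAdd N' l)) := rfl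
          have hl : (fun j => (c • x) (Fin.castAdd N'' j))
              = c • (fun j => x (Fin.castAdd N'' j)) := rfl
          rw [hr, hl, _root_.map_smul, ← smul_sub]
          exact Submodule.smul_mem _ _ px
    have h1b : ∀ a ∈ S', emb a (0 : Fin N'' → ZMod 2) ∈ Submodule.span (ZMod 2)
        {v : Fin (N' + N'') → ZMod 2 | ∃ j, Fin.castAdd N'' i < j ∧ v = G j} := by
      intro a ha
      induction ha using Submodule.span_induction with
      | mem x hx =>
          obtain ⟨j, hij, rfl⟩ := hx
          refine Submodule.subset_span ⟨Fin.castAdd N'' j, ?_, (rowL j).symm⟩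
          rw [Fin.lt_def, Fin.coe_castAdd, Fin.coe_castAdd]
          exact Fin.lt_def.mp hij
      | zero => rw [emb_zero]; exact Submodule.zero_mem _
      | add x y hx hy px py =>
          have h := emb_add x y (0 : Fin N'' → ZMod 2) 0
          rw [add_zero] at h
          rw [h]
          exact Submodule.add_mem _ px py
      | smul c x hx px =>
          have h := emb_smul c x (0 : Fin N'' → ZMod 2)
          rw [smul_zero] at h
          rw [h]
          exact Submodule.smul_mem _ _ px
    unfold cosetD
    apply le_antisymm
    · have hBne : ((fun w => hammingDist (G' i) w) '' (S' : Set (Fin N' → ZMod 2))).Nonempty :=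
        ⟨_, 0, Submodule.zero_mem _, rfl⟩
      obtain ⟨a, ha, hda⟩ := Nat.sInf_mem hBne
      apply Nat.sInf_le
      refine ⟨emb a 0, h1b a ha, ?_⟩
      beta_reduce
      rw [distSplit, rowL i]
      simp only [emb_castAdd, emb_natAdd]
      beta_reduce at hda
      rw [← hda]
      simp [hammingDist_self]
    · have hAne : ((fun w => hammingDist (G (Fin.castAdd N'' i)) w) ''
          ((Submodule.span (ZMod 2)
            {v : Fin (N' + N'') → ZMod 2 | ∃ j, Fin.castAdd N'' i < j ∧ v = G j} :
            Submodule (ZMod 2) (Fin (N' + N'') → ZMod 2)) :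
            Set (Fin (N' + N'') → ZMod 2))).Nonempty :=
        ⟨_, 0, Submodule.zero_mem _, rfl⟩
      obtain ⟨w, hw, hdw⟩ := Nat.sInf_mem hAne
      beta_reduce at hdw
      rw [← hdw]
      have hmem := h1a w hw
      refine le_trans (Nat.sInf_le ⟨_, hmem, rfl⟩) ?_
      rw [distSplit, rowL i]
      simp only [emb_castAdd, emb_natAdd]
      set L := fun j => w (Fin.castAdd N'' j) with hL
      set R := fun l => w (Fin.natAdd N' l) with hR
      have h2 : hammingDist L (L - Qmap γ R) = hammingDist (fun l => (0 : ZMod 2)) R := by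
        rw [hammingDist_comm, hammingDist_eq_hammingNorm, show -(L - Qmap γ R) + L = Qmap γ R by abel]
        have : hammingNorm (Qmap γ R) = hammingDist (Qmap γ R) (Qmap γ 0) := by
          rw [map_zero, hammingDist_zero_right]
        rw [this, Qmap_dist hγ]
        rw [show (fun l => (0 : ZMod 2)) = (0 : Fin N'' → ZMod 2) from rfl]
        rw [hammingDist_comm]
      calc hammingDist (G' i) (L - Qmap γ R)
          ≤ hammingDist (G' i) L + hammingDist L (L - Qmap γ R) := hammingDist_triangle _ _ _
        _ = hammingDist (G' i) L + hammingDist (fun l => (0 : ZMod 2)) R := by rw [h2]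
  · -- second block
    intro i
    set S'' : Submodule (ZMod 2) (Fin N'' → ZMod 2) :=
      Submodule.span (ZMod 2) {v : Fin N'' → ZMod 2 | ∃ j, i < j ∧ v = G'' j} with hS''
    have h2a : ∀ w ∈ Submodule.span (ZMod 2)
        {v : Fin (N' + N'') → ZMod 2 | ∃ j, Fin.natAdd N' i < j ∧ v = G j},
        (fun l => w (Fin.natAdd N' l)) ∈ S'' ∧
        (fun j => w (Fin.castAdd N'' j)) = Qmap γ (fun l => w (Fin.natAdd N' l)) := by
      intro w hw
      induction hw using Submodule.span_induction with
      | mem x hx =>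
          obtain ⟨j, hij, rfl⟩ := hx
          revert hij
          induction j using Fin.addCases with
          | left j' =>
              intro hij
              exfalso
              rw [Fin.lt_def, Fin.coe_natAdd, Fin.coe_castAdd] at hij
              exact absurd j'.isLt (by omega)
          | right l =>
              intro hij
              have hil : i < l := by
                rw [Fin.lt_def, Fin.coe_natAdd, Fin.coe_natAdd] at hij
                rw [Fin.lt_def]; omega
              rw [rowR l]
              simp only [emb_castAdd, emb_natAdd]
              have hGl : (fun m => G'' l m) = G'' l := rfl
              have hPl : (fun m => P l m) = P l := rfl
              rw [hGl, hPl, ← hPQ l]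
              exact ⟨Submodule.subset_span ⟨l, hil, rfl⟩, rfl⟩
      | zero =>
          have hz : (fun l => (0 : Fin (N' + N'') → ZMod 2) (Fin.natAdd N' l))
              = (0 : Fin N'' → ZMod 2) := rfl
          rw [hz, map_zero]
          exact ⟨Submodule.zero_mem _, rfl⟩
      | add x y hx hy px py =>
          have hr : (fun l => (x + y) (Fin.natAdd N' l))
              = (fun l => x (Fin.natAdd N' l)) + (fun l => y (Fin.natAdd N' l)) := rfl
          have hl : (fun j => (x + y) (Fin.castAdd N'' j))
              = (fun j => x (Fin.castAdd N'' j)) + (fun j => y (Fin.castAdd N'' j)) := rfl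
          rw [hr, hl, map_add, px.2, py.2]
          exact ⟨Submodule.add_mem _ px.1 py.1, rfl⟩
      | smul c x hx px =>
          have hr : (fun l => (c • x) (Fin.natAdd N' l))
              = c • (fun l => x (Fin.natAdd N' l)) := rfl
          have hl : (fun j => (c • x) (Fin.castAdd N'' j))
              = c • (fun j => x (Fin.castAdd N'' j)) := rfl
          rw [hr, hl, _root_.map_smul, px.2]
          exact ⟨Submodule.smul_mem _ _ px.1, rfl⟩
    have h2b : ∀ b ∈ S'', emb (Qmap γ b) b ∈ Submodule.span (ZMod 2)
        {v : Fin (N' + N'') → ZMod 2 | ∃ j, Fin.natAdd N' i < j ∧ v = G j} := by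
      intro b hb
      induction hb using Submodule.span_induction with
      | mem x hx =>
          obtain ⟨l, hil, rfl⟩ := hx
          rw [hPQ l]
          refine Submodule.subset_span ⟨Fin.natAdd N' l, ?_, (rowR l).symm⟩
          rw [Fin.lt_def, Fin.coe_natAdd, Fin.coe_natAdd]
          have := Fin.lt_def.mp hil; omega
      | zero => rw [map_zero, emb_zero]; exact Submodule.zero_mem _
      | add x y hx hy px py =>
          rw [map_add, emb_add]
          exact Submodule.add_mem _ px py
      | smul c x hx px =>
          rw [_root_.map_smul, emb_smul]
          exact Submodule.smul_mem _ _ px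
    unfold cosetD
    apply le_antisymm
    · have hBne : ((fun w => hammingDist (G'' i) w) '' (S'' : Set (Fin N'' → ZMod 2))).Nonempty :=
        ⟨_, 0, Submodule.zero_mem _, rfl⟩
      obtain ⟨b, hb, hdb⟩ := Nat.sInf_mem hBne
      apply Nat.sInf_le
      refine ⟨emb (Qmap γ b) b, h2b b hb, ?_⟩
      beta_reduce
      rw [distSplit, rowR i]
      simp only [emb_castAdd, emb_natAdd]
      have hfirst : hammingDist (fun j => P i j) (fun j => Qmap γ b j)
          = hammingDist (G'' i) b := by
        have hPl : (fun j => P i j) = P i := rfl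
        have hQl : (fun j => Qmap γ b j) = Qmap γ b := rfl
        rw [hPl, hQl, ← hPQ i, Qmap_dist hγ]
      rw [hfirst]
      have hsec : hammingDist (fun m => G'' i m) (fun m => b m) = hammingDist (G'' i) b := rfl
      beta_reduce at hdb
      rw [hsec, ← hdb, two_mul]
    · have hAne : ((fun w => hammingDist (G (Fin.natAdd N' i)) w) ''
          ((Submodule.span (ZMod 2)
            {v : Fin (N' + N'') → ZMod 2 | ∃ j, Fin.natAdd N' i < j ∧ v = G j} :
            Submodule (ZMod 2) (Fin (N' + N'') → ZMod 2)) :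
            Set (Fin (N' + N'') → ZMod 2))).Nonempty :=
        ⟨_, 0, Submodule.zero_mem _, rfl⟩
      obtain ⟨w, hw, hdw⟩ := Nat.sInf_mem hAne
      beta_reduce at hdw
      rw [← hdw]
      obtain ⟨hmem, heq⟩ := h2a w hw
      rw [distSplit, rowR i]
      simp only [emb_castAdd, emb_natAdd]
      set L := fun j => w (Fin.castAdd N'' j) with hL
      set R := fun l => w (Fin.natAdd N' l) with hR
      have hfirst : hammingDist (fun j => P i j) L = hammingDist (G'' i) R := by
        have hPl : (fun j => P i j) = P i := rfl
        rw [hPl, heq, ← hPQ i, Qmap_dist hγ]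
      have hsec : hammingDist (fun m => G'' i m) R = hammingDist (G'' i) R := rfl
      rw [hfirst, hsec, ← two_mul]
      have h3 : sInf ((fun w => hammingDist (G'' i) w) ''
          ((Submodule.span (ZMod 2) {v : Fin N'' → ZMod 2 | ∃ j, i < j ∧ v = G'' j} :
            Submodule (ZMod 2) (Fin N'' → ZMod 2)) : Set (Fin N'' → ZMod 2)))
          ≤ hammingDist (G'' i) R := Nat.sInf_le ⟨R, hmem, rfl⟩
      omega
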